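/- Let $k$ be a field of characteristic $0$ and $B$ a field containing $k$. Then there is no injective group homomorphism from the symmetric group $\mathfrak{S}_5$ into $\mathrm{PGL}_2(B)$. -/
import Mathlib

open Matrix

section Aux

variable {B : Type*} [Field B]

/-- Cayley–Hamilton for 2×2 matrices, by hand. -/
private lemma sq_eq (M : Matrix (Fin 2) (Fin 2) B) :
    M * M = (trace M) • M - (det M) • (1 : Matrix (Fin 2) (Fin 2) B) := by
  ext i j
  fin_cases i <;> fin_cases j <;>
    simp [Matrix.mul_apply, Fin.sum_univ_two, Matrix.trace_fin_two, Matrix.det_fin_two,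
      Matrix.one_apply] <;> ring

/-- A GL₂ element whose underlying matrix is scalar lies in the center. -/
private lemma mem_center_of_scalar (S : GL (Fin 2) B) (c : B)
    (h : (S : Matrix (Fin 2) (Fin 2) B) = c • 1) :
    S ∈ Subgroup.center (GL (Fin 2) B) := by
  rw [Subgroup.mem_center_iff]
  intro g
  apply Units.ext
  show (g : Matrix (Fin 2) (Fin 2) B) * S = (S : Matrix (Fin 2) (Fin 2) B) * g
  rw [h, Matrix.mul_smul, Matrix.smul_mul, Matrix.mul_one, Matrix.one_mul]

/-- Every element of the center of GL₂ has scalar underlying matrix. -/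
private lemma scalar_of_mem_center (Z : GL (Fin 2) B)
    (h : Z ∈ Subgroup.center (GL (Fin 2) B)) :
    ∃ c : B, (Z : Matrix (Fin 2) (Fin 2) B) = c • 1 := by
  rw [Subgroup.mem_center_iff] at h
  set u1 : GL (Fin 2) B :=
    ⟨!![1, 1; 0, 1], !![1, -1; 0, 1], by ext i j; fin_cases i <;> fin_cases j <;>
      simp [Matrix.mul_apply, Fin.sum_univ_two, Matrix.one_apply],
      by ext i j; fin_cases i <;> fin_cases j <;>
      simp [Matrix.mul_apply, Fin.sum_univ_two, Matrix.one_apply]⟩ with hu1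
  set u2 : GL (Fin 2) B :=
    ⟨!![1, 0; 1, 1], !![1, 0; -1, 1], by ext i j; fin_cases i <;> fin_cases j <;>
      simp [Matrix.mul_apply, Fin.sum_univ_two, Matrix.one_apply],
      by ext i j; fin_cases i <;> fin_cases j <;>
      simp [Matrix.mul_apply, Fin.sum_univ_two, Matrix.one_apply]⟩ with hu2
  have h1 : (u1 : Matrix (Fin 2) (Fin 2) B) * Z = (Z : Matrix (Fin 2) (Fin 2) B) * u1 := by
    rw [← Units.val_mul, ← Units.val_mul, h u1]
  have h2 : (u2 : Matrix (Fin 2) (Fin 2) B) * Z = (Z : Matrix (Fin 2) (Fin 2) B) * u2 := by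
    rw [← Units.val_mul, ← Units.val_mul, h u2]
  refine ⟨(Z : Matrix (Fin 2) (Fin 2) B) 0 0, ?_⟩
  have e10 : (Z : Matrix (Fin 2) (Fin 2) B) 1 0 = 0 := by
    have := congrFun (congrFun h1 1 : _) 1
    simpa [hu1, Matrix.mul_apply, Fin.sum_univ_two] using this
  have e01 : (Z : Matrix (Fin 2) (Fin 2) B) 0 1 = 0 := by
    have := congrFun (congrFun h2 0 : _) 0
    simpa [hu2, Matrix.mul_apply, Fin.sum_univ_two] using this
  have e11 : (Z : Matrix (Fin 2) (Fin 2) B) 1 1 = (Z : Matrix (Fin 2) (Fin 2) B) 0 0 := by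
    have := congrFun (congrFun h1 0 : _) 1
    simp [hu1, Matrix.mul_apply, Fin.sum_univ_two] at this
    linear_combination this
  ext i j
  fin_cases i <;> fin_cases j <;> simp [Matrix.one_apply, e10, e01, e11]

end Aux

/-- If `B` is a field of characteristic `0`, then there is no injective
group homomorphism from the symmetric group `𝔖₅` into `PGL₂(B) = GL₂(B)/B^×`
(the quotient of `GL₂(B)` by its center, the scalar matrices). -/
theorem statement17 (B : Type*) [Field B] [CharZero B] :
    ¬ ∃ f : Equiv.Perm (Fin 5) →*
        (GL (Fin 2) B ⧸ Subgroup.center (GL (Fin 2) B)),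
      Function.Injective f := by
  rintro ⟨f, hf⟩
  -- The two permutations: σ = (0 1 2 3 4), τ = multiplication by 2 on ℤ/5,
  -- satisfying τ σ τ⁻¹ = σ².
  set σ : Equiv.Perm (Fin 5) := finRotate 5 with hσdef
  set τ : Equiv.Perm (Fin 5) := ⟨fun y => 2 * y, fun y => 3 * y, by decide, by decide⟩ with hτdef
  have hσ5 : σ ^ 5 = 1 := by decide
  have hσ1 : σ ≠ 1 := by decide
  have hconj : τ * σ * τ⁻¹ = σ ^ 2 := by decide
  -- Push through f and lift to GL₂.
  obtain ⟨S, hS⟩ := QuotientGroup.mk_surjective (f σ)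
  obtain ⟨T, hT⟩ := QuotientGroup.mk_surjective (f τ)
  have hS5 : S ^ 5 ∈ Subgroup.center (GL (Fin 2) B) := by
    have : (QuotientGroup.mk (S ^ 5) :
        GL (Fin 2) B ⧸ Subgroup.center (GL (Fin 2) B)) = 1 := by
      rw [QuotientGroup.mk_pow, hS, ← _root_.map_pow, hσ5, _root_.map_one]
    exact (QuotientGroup.eq_one_iff _).mp this
  have hSnc : S ∉ Subgroup.center (GL (Fin 2) B) := by
    intro h
    apply hσ1
    apply hf
    rw [_root_.map_one, ← hS]
    exact (QuotientGroup.eq_one_iff _).mpr h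
  have hTS : ∃ Z ∈ Subgroup.center (GL (Fin 2) B), T * S * T⁻¹ = S ^ 2 * Z := by
    have : (QuotientGroup.mk (T * S * T⁻¹) :
        GL (Fin 2) B ⧸ Subgroup.center (GL (Fin 2) B)) = QuotientGroup.mk (S ^ 2) := by
      rw [QuotientGroup.mk_mul, QuotientGroup.mk_mul, QuotientGroup.mk_inv, hS, hT,
        QuotientGroup.mk_pow, hS, ← _root_.map_inv, ← _root_.map_mul, ← _root_.map_mul,
        hconj, _root_.map_pow]
    have hmem := (QuotientGroup.eq (s := Subgroup.center (GL (Fin 2) B))).mp this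
    refine ⟨((T * S * T⁻¹)⁻¹ * S ^ 2)⁻¹, (Subgroup.center _).inv_mem hmem, ?_⟩
    group
  obtain ⟨Z, hZc, hZ⟩ := hTS
  obtain ⟨c, hc⟩ := scalar_of_mem_center Z hZc
  obtain ⟨w, hw⟩ := scalar_of_mem_center (S ^ 5) hS5
  -- Pass to matrices.
  set M : Matrix (Fin 2) (Fin 2) B := (S : Matrix (Fin 2) (Fin 2) B) with hM
  set r : B := trace M with hr
  set d : B := det M with hd
  have hdet_ne : d ≠ 0 := by
    intro h0
    have h1 : d * det ((S⁻¹ : GL (Fin 2) B) : Matrix (Fin 2) (Fin 2) B) = 1 := by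
      rw [hd, ← det_mul, ← Units.val_mul, mul_inv_cancel, Units.val_one, det_one]
    rw [h0, zero_mul] at h1
    exact zero_ne_one h1
  have h2 : M * M = r • M - d • (1 : Matrix (Fin 2) (Fin 2) B) := sq_eq M
  -- No scalar combination: coefficients of a scalar identity must vanish.
  have hnonscalar : ∀ k e : B, k • M = e • (1 : Matrix (Fin 2) (Fin 2) B) → k = 0 := by
    intro k e hke
    by_contra hk
    apply hSnc
    apply mem_center_of_scalar S (k⁻¹ * e)
    rw [← hM, mul_smul, ← hke, smul_smul, inv_mul_cancel₀ hk, one_smul]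
  -- M⁵ is scalar: get the order-5 trace/det relation.
  have hM5 : M ^ 5 = w • 1 := by
    rw [hM, ← Units.val_pow_eq_pow_val, hw]
  have e3 : M ^ 3 = (r ^ 2 - d) • M - (r * d) • (1 : Matrix (Fin 2) (Fin 2) B) := by
    have h3 : M ^ 3 = (M * M) * M := by rw [pow_succ, pow_two]
    rw [h3, h2, sub_mul, smul_mul_assoc, smul_mul_assoc, one_mul, h2]
    module
  have e4 : M ^ 4 = (r ^ 3 - 2 * r * d) • M
      - (r ^ 2 * d - d ^ 2) • (1 : Matrix (Fin 2) (Fin 2) B) := by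
    have h4 : M ^ 4 = M ^ 3 * M := by rw [pow_succ]
    rw [h4, e3, sub_mul, smul_mul_assoc, smul_mul_assoc, one_mul, h2]
    module
  have e5 : M ^ 5 = (r ^ 4 - 3 * r ^ 2 * d + d ^ 2) • M
      - (r ^ 3 * d - 2 * r * d ^ 2) • (1 : Matrix (Fin 2) (Fin 2) B) := by
    have h5 : M ^ 5 = M ^ 4 * M := by rw [pow_succ]
    rw [h5, e4, sub_mul, smul_mul_assoc, smul_mul_assoc, one_mul, h2]
    module
  have hA : r ^ 4 - 3 * r ^ 2 * d + d ^ 2 = 0 := by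
    apply hnonscalar _ (w + (r ^ 3 * d - 2 * r * d ^ 2))
    have key : (r ^ 4 - 3 * r ^ 2 * d + d ^ 2) • M
        = ((r ^ 4 - 3 * r ^ 2 * d + d ^ 2) • M
            - (r ^ 3 * d - 2 * r * d ^ 2) • (1 : Matrix (Fin 2) (Fin 2) B))
          + (r ^ 3 * d - 2 * r * d ^ 2) • (1 : Matrix (Fin 2) (Fin 2) B) := by module
    rw [key, ← e5, hM5]
    module
  -- The conjugation relation at the matrix level.
  have hmat : (T : Matrix (Fin 2) (Fin 2) B) * M * ((T⁻¹ : GL (Fin 2) B) : Matrix (Fin 2) (Fin 2) B)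
      = c • (M * M) := by
    have := congrArg (fun g : GL (Fin 2) B => (g : Matrix (Fin 2) (Fin 2) B)) hZ
    simp only [Units.val_mul] at this
    rw [hM, this, pow_two, Units.val_mul, hc, Matrix.mul_smul, Matrix.mul_one]
  have hTTi : ((T⁻¹ : GL (Fin 2) B) : Matrix (Fin 2) (Fin 2) B) * (T : Matrix (Fin 2) (Fin 2) B)
      = 1 := by rw [← Units.val_mul, inv_mul_cancel, Units.val_one]
  -- Trace relation.
  have htrMM : trace (M * M) = r * r - 2 * d := by
    rw [h2, trace_sub, trace_smul, trace_smul, trace_one, ← hr, smul_eq_mul, smul_eq_mul]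
    simp
    ring
  have htr : r = c * (r * r - 2 * d) := by
    have h1 : trace ((T : Matrix (Fin 2) (Fin 2) B) * M *
        ((T⁻¹ : GL (Fin 2) B) : Matrix (Fin 2) (Fin 2) B)) = r := by
      rw [trace_mul_comm, ← Matrix.mul_assoc, hTTi, Matrix.one_mul, hr]
    have h2' : trace (c • (M * M)) = c * (r * r - 2 * d) := by
      rw [trace_smul, htrMM, smul_eq_mul]
    rw [← h2', ← hmat]
    exact h1.symm
  -- Determinant relation.
  have hdet : d = c ^ 2 * d ^ 2 := by
    have h1 : det ((T : Matrix (Fin 2) (Fin 2) B) * M *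
        ((T⁻¹ : GL (Fin 2) B) : Matrix (Fin 2) (Fin 2) B)) = d := by
      rw [det_mul, det_mul, mul_comm, ← mul_assoc, ← det_mul, hTTi, det_one, one_mul, hd]
    have h2' : det (c • (M * M)) = c ^ 2 * d ^ 2 := by
      rw [det_smul, det_mul, ← hd, Fintype.card_fin]
      ring
    rw [← h2', ← hmat]
    exact h1.symm
  -- Combine: c² d = 1, hence d r² = (r² − 2d)², and with hA this forces 5 d³ = 0.
  have hcd : c ^ 2 * d = 1 := by
    have hz : (c ^ 2 * d - 1) * d = 0 := by linear_combination -hdet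
    rcases mul_eq_zero.mp hz with h | h
    · linear_combination h
    · exact absurd h hdet_ne
  have hB : d * r ^ 2 = (r ^ 2 - 2 * d) ^ 2 := by
    linear_combination (d * r + d * c * (r * r - 2 * d)) * htr + (r * r - 2 * d) ^ 2 * hcd
  have h5d : (5 : B) * d ^ 3 = 0 := by
    linear_combination (2 * r ^ 2 - 7 * d) * hA + (2 * r ^ 2 - 3 * d) * hB
  have hd3 : d ^ 3 = 0 := by
    have h5ne : (5 : B) ≠ 0 := by norm_num
    exact (mul_eq_zero.mp h5d).resolve_left h5ne
  exact hdet_ne (pow_eq_zero_iff (by norm_num) |>.mp hd3)
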